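/- For every k ≥ 3, the complement of the odd cycle C_{2k+1} contains no induced cycle of odd length at least 5. -/

import Mathlib

open SimpleGraph
open scoped Fin.CommRing Fin.NatCast Fin.IntCast

/-- for `k ≥ 3`, the complement of `C_{2k+1}` contains no induced cycle of
odd length at least 5. -/
theorem stmt_12 (k : ℕ) (hk : 3 ≤ k) :
    ¬ ∃ (n : ℕ) (s : Set (Fin (2*k+1))),
      5 ≤ n ∧ Odd n ∧
      Nonempty ((((cycleGraph (2*k+1))ᶜ).induce s) ≃g cycleGraph n) := by
  rintro ⟨n, s, hn5, hodd, ⟨e⟩⟩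
  have hm7 : 7 ≤ 2*k+1 := by omega
  -- helper : adjacency in cycleGraph (2*k+1) means ±1
  have adj_mem : ∀ a w : Fin (2*k+1), (cycleGraph (2*k+1)).Adj a w → w = a + 1 ∨ w = a - 1 := by
    intro a w h
    rw [cycleGraph_adj'] at h
    have h1 : ((1 : Fin (2*k+1))).val = 1 := by
      have : (1 : ℕ) % (2*k+1) = 1 := Nat.mod_eq_of_lt (by omega)
      simpa [Fin.val_one'] using this
    rcases h with h | h
    · right
      have : a - w = 1 := Fin.ext (by omega)
      rw [← this]
      exact (sub_sub_cancel a w).symm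
    · left
      have : w - a = 1 := Fin.ext (by omega)
      rw [← this]
      ring
  set f := e.symm with hf
  -- transfer: non-adjacent distinct vertices of C_n map to adjacent vertices of C_m
  have key : ∀ i j : Fin n, i ≠ j → ¬ (cycleGraph n).Adj i j →
      (cycleGraph (2*k+1)).Adj ↑(f i) ↑(f j) := by
    intro i j hij hadj
    by_contra hc
    have hne : (↑(f i) : Fin (2*k+1)) ≠ ↑(f j) := by
      intro h
      exact hij (f.injective (Subtype.coe_injective h))
    have : (((cycleGraph (2*k+1))ᶜ).induce s).Adj (f i) (f j) := by
      simp only [comap_adj, Function.Embedding.coe_subtype, compl_adj]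
      exact ⟨hne, hc⟩
    rw [f.map_adj_iff] at this
    exact hadj this
  -- Step 1 : n = 5
  have hn : n = 5 := by
    by_contra hne5
    have hn6 : 6 ≤ n := by
      rcases hodd with ⟨t, ht⟩
      omega
    -- vertices 0, 2, 3, 4 of C_n
    have hsub : ∀ a b : ℕ, (ha : a < n) → (hb : b < n) →
        ((⟨a, ha⟩ : Fin n) - ⟨b, hb⟩).val = (a + (n - b)) % n := by
      intro a b ha hb
      rw [Fin.sub_def]
      simp [Nat.add_comm]
    have hnadj : ∀ b : ℕ, (hb : b < n) → 2 ≤ b → b + 2 ≤ n →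
        ¬ (cycleGraph n).Adj ⟨0, by omega⟩ ⟨b, hb⟩ := by
      intro b hb hb2 hbn hadj
      rw [cycleGraph_adj'] at hadj
      rw [hsub 0 b (by omega) hb, hsub b 0 hb (by omega)] at hadj
      have e1 : (0 + (n - b)) % n = n - b := by rw [Nat.zero_add]; exact Nat.mod_eq_of_lt (by omega)
      have e2 : (b + (n - 0)) % n = b := by
        have : b + (n - 0) = b + 1 * n := by omega
        rw [this, Nat.add_mul_mod_self_right]
        exact Nat.mod_eq_of_lt hb
      rw [e1, e2] at hadj
      omega
    have h2 := key ⟨0, by omega⟩ ⟨2, by omega⟩ (by simp [Fin.ext_iff])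
      (hnadj 2 (by omega) (by omega) (by omega))
    have h3 := key ⟨0, by omega⟩ ⟨3, by omega⟩ (by simp [Fin.ext_iff])
      (hnadj 3 (by omega) (by omega) (by omega))
    have h4 := key ⟨0, by omega⟩ ⟨4, by omega⟩ (by simp [Fin.ext_iff])
      (hnadj 4 (by omega) (by omega) (by omega))
    have hb2 := adj_mem _ _ h2
    have hb3 := adj_mem _ _ h3
    have hb4 := adj_mem _ _ h4
    set a := (↑(f ⟨0, by omega⟩) : Fin (2*k+1))
    have hdisj : (↑(f ⟨2, by omega⟩) : Fin (2*k+1)) = ↑(f ⟨3, by omega⟩) ∨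
        (↑(f ⟨2, by omega⟩) : Fin (2*k+1)) = ↑(f ⟨4, by omega⟩) ∨
        (↑(f ⟨3, by omega⟩) : Fin (2*k+1)) = ↑(f ⟨4, by omega⟩) := by
      rcases hb2 with h | h <;> rcases hb3 with h' | h' <;> rcases hb4 with h'' | h'' <;>
        simp [h, h', h'']
    have hinj : ∀ (i j : Fin n), (↑(f i) : Fin (2*k+1)) = ↑(f j) → i = j := by
      intro i j h
      exact f.injective (Subtype.coe_injective h)
    rcases hdisj with h | h | h <;>
      · have := hinj _ _ h
        simp [Fin.ext_iff] at this
  subst hn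
  -- Step 2 : s is closed under +1
  have hstep : ∀ v : Fin (2*k+1), v ∈ s → v + 1 ∈ s := by
    intro v hv
    set i : Fin 5 := e ⟨v, hv⟩ with hi
    have hfi : f i = ⟨v, hv⟩ := e.toEquiv.symm_apply_apply _
    have hnadj2 : ¬ (cycleGraph 5).Adj i (i + 2) := by
      rw [cycleGraph_adj']
      have e1 : i - (i + 2) = -2 := by ring
      have e2 : (i + 2) - i = 2 := by ring
      rw [e1, e2]
      decide
    have hnadj3 : ¬ (cycleGraph 5).Adj i (i + 3) := by
      rw [cycleGraph_adj']
      have e1 : i - (i + 3) = -3 := by ring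
      have e2 : (i + 3) - i = 3 := by ring
      rw [e1, e2]
      decide
    have hne2 : i ≠ i + 2 := by
      intro h
      have : (2 : Fin 5) = 0 := by
        have := left_eq_add.mp h
        exact this
      exact absurd this (by decide)
    have hne3 : i ≠ i + 3 := by
      intro h
      have : (3 : Fin 5) = 0 := left_eq_add.mp h
      exact absurd this (by decide)
    have h2 := key i (i + 2) hne2 hnadj2
    have h3 := key i (i + 3) hne3 hnadj3
    rw [hfi] at h2 h3
    have hb := adj_mem _ _ h2
    have hc := adj_mem _ _ h3
    have hbc : (↑(f (i + 2)) : Fin (2*k+1)) ≠ ↑(f (i + 3)) := by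
      intro h
      have := f.injective (Subtype.coe_injective h)
      have : (2 : Fin 5) = 3 := by
        have h' := add_left_cancel this
        exact h'
      exact absurd this (by decide)
    rcases hb with hb | hb
    · rw [← hb]; exact (f (i + 2)).2
    · rcases hc with hc | hc
      · rw [← hc]; exact (f (i + 3)).2
      · exact absurd (hb.trans hc.symm) hbc
  -- Step 3 : s = univ
  have hv0 : (↑(f 0) : Fin (2*k+1)) ∈ s := (f 0).2
  set v0 : Fin (2*k+1) := ↑(f 0)
  have hall : ∀ t : ℕ, v0 + (t : Fin (2*k+1)) ∈ s := by
    intro t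
    induction t with
    | zero => simpa using hv0
    | succ t ih =>
      have : ((t + 1 : ℕ) : Fin (2*k+1)) = (t : Fin (2*k+1)) + 1 := by push_cast; ring
      rw [this, ← add_assoc]
      exact hstep _ ih
  have huniv : s = Set.univ := by
    rw [Set.eq_univ_iff_forall]
    intro x
    have := hall (x - v0).val
    rwa [Fin.cast_val_eq_self, show v0 + (x - v0) = x from by ring] at this
  -- Step 4 : cardinality contradiction
  have hcard5 : Nat.card s = 5 := by
    have := Nat.card_congr e.toEquiv
    simpa using this
  have hcardm : Nat.card s = 2*k+1 := by
    rw [huniv]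
    simpa using Nat.card_congr (Equiv.Set.univ (Fin (2*k+1)))
  omega
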